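/- Let a ≥ 2 and n ≥ 1 be natural numbers, let m ≥ 2, and let l_1 < l_2 < ... < l_m be positive integers such that the numbers p_i = a^{l_i} n + 1 are (distinct) primes for i = 1, ..., m. Then N = p_1 p_2 ⋯ p_m is not a Carmichael number; that is, there exists an integer c with c^N ≢ c (mod N). -/

import Mathlib

/-- Auxiliary: a product of factors `1 + n * b i` with `B ∣ b i` is congruent to
`1 + n * ∑ b i` modulo `n * B ^ 2`. -/
lemma aux_prod_one_add_mul {ι : Type*} (s : Finset ι) (n B : ℤ) (b : ι → ℤ)
    (hb : ∀ i ∈ s, B ∣ b i) :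
    n * B ^ 2 ∣ (∏ i ∈ s, (1 + n * b i)) - (1 + n * ∑ i ∈ s, b i) := by
  induction s using Finset.cons_induction with
  | empty => simp
  | cons i s his ih =>
    rw [Finset.prod_cons, Finset.sum_cons]
    have h1 := (ih (fun j hj => hb j (Finset.mem_cons_of_mem hj))).mul_left (1 + n * b i)
    obtain ⟨x, hx⟩ := hb i (Finset.mem_cons_self i s)
    obtain ⟨y, hy⟩ := Finset.dvd_sum (fun j hj => hb j (Finset.mem_cons_of_mem hj))
    have h2 : n * B ^ 2 ∣ (n * b i) * (n * ∑ j ∈ s, b j) :=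
      ⟨x * y * n, by rw [hx, hy]; ring⟩
    have h := h1.add h2
    convert h using 1
    · rfl
    ring

/-- If `p i = a ^ (l i) * n + 1` are primes with `l` strictly increasing and positive
(`a ≥ 2`, `n ≥ 1`, `m ≥ 2`), then `N = ∏ p i` is not a Carmichael number:
some integer `c` satisfies `c ^ N ≢ c (mod N)`. -/
theorem not_carmichael_of_tuple (a n m : ℕ) (ha : 2 ≤ a) (hn : 1 ≤ n) (hm : 2 ≤ m)
    (l : Fin m → ℕ) (hl : ∀ i, 1 ≤ l i) (hmono : StrictMono l)
    (hprime : ∀ i, Nat.Prime (a ^ l i * n + 1)) :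
    ∃ c : ℤ, ¬ (c ^ (∏ i, (a ^ l i * n + 1)) ≡ c [ZMOD ((∏ i, (a ^ l i * n + 1) : ℕ) : ℤ)]) := by
  set N := ∏ i, (a ^ l i * n + 1) with hNdef
  set i0 : Fin m := ⟨0, by omega⟩ with hi0
  set i1 : Fin m := ⟨1, by omega⟩ with hi1
  have hi01 : i0 < i1 := by rw [Fin.lt_def]; exact Nat.zero_lt_one
  have hNpos : 1 ≤ N := Finset.one_le_prod' (fun i _ => Nat.succ_le_succ (Nat.zero_le _))
  have h0le : ∀ i : Fin m, l i0 ≤ l i := fun i =>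
    hmono.monotone (by rw [Fin.le_def]; exact Nat.zero_le _)
  set p := a ^ l i1 * n + 1 with hpdef
  have hp : p.Prime := hprime i1
  have hpdvd : p ∣ N := Finset.dvd_prod_of_mem _ (Finset.mem_univ i1)
  -- Key: p - 1 does not divide N - 1
  have key : ¬ (a ^ l i1 * n ∣ N - 1) := by
    intro hdvd
    have hz : ((a : ℤ) ^ l i1 * n) ∣ (N : ℤ) - 1 := by
      have h := Int.natCast_dvd_natCast.mpr hdvd
      rw [Nat.cast_sub hNpos] at h
      exact_mod_cast h
    have hNz : (N : ℤ) = ∏ i, (1 + (n : ℤ) * (a : ℤ) ^ l i) := by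
      rw [hNdef]
      push_cast
      exact Finset.prod_congr rfl (fun i _ => by ring)
    have hmain := aux_prod_one_add_mul Finset.univ (n : ℤ) ((a : ℤ) ^ l i0)
      (fun i => (a : ℤ) ^ l i) (fun i _ => pow_dvd_pow _ (h0le i))
    rw [← hNz, ← pow_mul] at hmain
    set Sz : ℤ := ∑ i, (a : ℤ) ^ l i with hSz
    have hd1 : ((n : ℤ) * a ^ (l i0 + 1)) ∣ (N : ℤ) - (1 + n * Sz) :=
      dvd_trans (mul_dvd_mul_left _ (pow_dvd_pow _ (by have := hl i0; omega))) hmain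
    have hd2 : ((n : ℤ) * a ^ (l i0 + 1)) ∣ (N : ℤ) - 1 := by
      refine dvd_trans ?_ hz
      rw [mul_comm]
      exact mul_dvd_mul (pow_dvd_pow _ (by have := hmono hi01; omega)) dvd_rfl
    have hd3 : ((n : ℤ) * a ^ (l i0 + 1)) ∣ (n : ℤ) * Sz := by
      have h := hd2.sub hd1
      convert h using 1
      · rfl
      ring
    have hd4 : (a : ℤ) ^ (l i0 + 1) ∣ Sz :=
      (mul_dvd_mul_iff_left (show (n : ℤ) ≠ 0 by positivity)).mp hd3
    have hu : Sz = (a : ℤ) ^ l i0 * ∑ i, (a : ℤ) ^ (l i - l i0) := by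
      rw [Finset.mul_sum]
      exact Finset.sum_congr rfl (fun i _ => by
        rw [← pow_add]; congr 1; have := h0le i; omega)
    have hdu : (a : ℤ) ∣ ∑ i, (a : ℤ) ^ (l i - l i0) := by
      rw [hu, pow_succ] at hd4
      exact (mul_dvd_mul_iff_left (show ((a : ℤ) ^ l i0) ≠ 0 by positivity)).mp hd4
    have hsplit : ∑ i, (a : ℤ) ^ (l i - l i0) =
        (∑ i ∈ Finset.univ.erase i0, (a : ℤ) ^ (l i - l i0)) + 1 := by
      rw [← Finset.sum_erase_add Finset.univ _ (Finset.mem_univ i0)]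
      simp
    have herase : (a : ℤ) ∣ ∑ i ∈ Finset.univ.erase i0, (a : ℤ) ^ (l i - l i0) := by
      refine Finset.dvd_sum (fun i hi => ?_)
      have hne : i ≠ i0 := Finset.ne_of_mem_erase hi
      have hlt : i0 < i := by
        rw [Fin.lt_def]
        have : i.val ≠ i0.val := fun h => hne (Fin.ext h)
        simp only [hi0] at this ⊢
        omega
      have := hmono hlt
      exact dvd_pow_self _ (by omega)
    rw [hsplit] at hdu
    have h1 : (a : ℤ) ∣ 1 := (dvd_add_right herase).mp hdu
    have h2 := Int.le_of_dvd one_pos h1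
    have h3 : (2 : ℤ) ≤ a := by exact_mod_cast ha
    omega
  -- Group theory part: take a primitive root mod p
  haveI : Fact p.Prime := ⟨hp⟩
  obtain ⟨g, hg⟩ := IsCyclic.exists_generator (α := (ZMod p)ˣ)
  refine ⟨(((g : ZMod p).val : ℕ) : ℤ), fun hc => ?_⟩
  have hpN : (p : ℤ) ∣ (N : ℤ) := Int.natCast_dvd_natCast.mpr hpdvd
  have hc2 := Int.ModEq.of_dvd hpN hc
  have hcast : (((g : ZMod p).val : ℕ) : ZMod p) = (g : ZMod p) := by
    simp [ZMod.natCast_val, ZMod.cast_id]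
  have hzm : ((g : ZMod p)) ^ N = (g : ZMod p) := by
    have h := (ZMod.intCast_eq_intCast_iff _ _ _).mpr hc2
    push_cast at h
    rw [hcast] at h
    exact h
  have hgN : g ^ N = g := Units.ext (by rw [Units.val_pow_eq_pow_val]; exact hzm)
  have hg1 : g ^ (N - 1) = 1 := by
    have h : g ^ (N - 1) * g = 1 * g := by
      rw [one_mul, ← pow_succ]
      rw [show N - 1 + 1 = N by omega]
      exact hgN
    exact mul_right_cancel h
  have hord : orderOf g ∣ N - 1 := orderOf_dvd_of_pow_eq_one hg1
  have hcard : orderOf g = p - 1 := by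
    rw [orderOf_eq_card_of_forall_mem_zpowers hg, Nat.card_eq_fintype_card, ZMod.card_units]
  rw [hcard] at hord
  have hpm1 : p - 1 = a ^ l i1 * n := by omega
  rw [hpm1] at hord
  exact key hord
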